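/- arXiv:2303.07444 — 3 statements merged into one kernel-verified Lean document; each statement's English description precedes it below -/
import Mathlib

section
/- Let G be the intersection graph of a finite family of closed disks in the Euclidean plane ℝ², all having the same radius. Then the layered tree-independence number of G is at most 8. -/
open Classical

/-- A tree decomposition of a graph `G`. -/
structure TreeDecomp {V : Type*} (G : SimpleGraph V) where
  ι : Type
  fin : Fintype ι
  T : SimpleGraph ι
  isTree : T.IsTree
  bag : ι → Set V
  mem_bag : ∀ v : V, ∃ t, v ∈ bag t
  edge_bag : ∀ ⦃u v : V⦄, G.Adj u v → ∃ t, u ∈ bag t ∧ v ∈ bag t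
  bag_connected : ∀ v : V, (T.induce {t | v ∈ bag t}).Connected

/-- `I` is an independent set of `G` contained in `S`, i.e. an independent set of `G[S]`. -/
def IsIndepSetIn {V : Type*} (G : SimpleGraph V) (S : Set V) (I : Finset V) : Prop :=
  ↑I ⊆ S ∧ ∀ u ∈ I, ∀ v ∈ I, u ≠ v → ¬ G.Adj u v

/-- `α(G[S]) ≤ k`. -/
def IndepLE {V : Type*} (G : SimpleGraph V) (S : Set V) (k : ℕ) : Prop :=
  ∀ I : Finset V, IsIndepSetIn G S I → I.card ≤ k

/-- The independence number of the tree decomposition is at most `k`. -/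
def TreeDecomp.IndepNumLE {V : Type*} {G : SimpleGraph V} (td : TreeDecomp G) (k : ℕ) : Prop :=
  ∀ t : td.ι, IndepLE G (td.bag t) k

/-- The tree-independence number of `G` is at most `k`. -/
def treeAlphaLE {V : Type*} (G : SimpleGraph V) (k : ℕ) : Prop :=
  ∃ td : TreeDecomp G, td.IndepNumLE k

/-- The tree-independence number of `G`. -/
noncomputable def treeAlpha {V : Type*} (G : SimpleGraph V) : ℕ :=
  sInf {k | treeAlphaLE G k}

/-- A layering of `G`, encoded by the function sending a vertex to the index of its layer. -/
def IsLayering {V : Type*} (G : SimpleGraph V) (L : V → ℕ) : Prop :=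
  ∀ ⦃u v : V⦄, G.Adj u v → (L u : ℤ) ≤ (L v : ℤ) + 1

/-- The layered tree-independence number of `G` is at most `k`. -/
def layeredTreeAlphaLE {V : Type*} (G : SimpleGraph V) (k : ℕ) : Prop :=
  ∃ (td : TreeDecomp G) (L : V → ℕ), IsLayering G L ∧
    ∀ (t : td.ι) (i : ℕ), IndepLE G (td.bag t ∩ {v | L v = i}) k

/-- The layered tree-independence number of `G`. -/
noncomputable def layeredTreeAlpha {V : Type*} (G : SimpleGraph V) : ℕ :=
  sInf {k | layeredTreeAlphaLE G k}

/-- The number of elements of the multiset `𝒞` containing `v` (with multiplicity). -/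
noncomputable def coverCount {V : Type*} (𝒞 : Multiset (Set V)) (v : V) : ℕ :=
  Multiset.countP (fun C => v ∈ C) 𝒞

/-- `𝒞` is a `β`-general cover: every vertex belongs to at least `β·|𝒞|` elements. -/
def IsGeneralCover {V : Type*} (β : ℝ) (𝒞 : Multiset (Set V)) : Prop :=
  𝒞 ≠ 0 ∧ ∀ v : V, β * (Multiset.card 𝒞 : ℝ) ≤ (coverCount 𝒞 v : ℝ)

/-- The intersection graph of an (indexed) family of sets. -/
def intersectionGraph {ι : Type*} {α : Type*} (D : ι → Set α) : SimpleGraph ι where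
  Adj i j := i ≠ j ∧ (D i ∩ D j).Nonempty
  symm := by
    constructor
    rintro i j ⟨hne, x, hx1, hx2⟩
    exact ⟨hne.symm, x, hx2, hx1⟩
  loopless := by
    constructor
    rintro i ⟨hne, -⟩
    exact hne rfl

/-- The `p`-th power of a graph. -/
def gpower {V : Type*} (G : SimpleGraph V) (p : ℕ) : SimpleGraph V where
  Adj u v := u ≠ v ∧ ∃ w : G.Walk u v, w.length ≤ p
  symm := by
    constructor
    rintro u v ⟨hne, w, hw⟩
    exact ⟨hne.symm, w.reverse, by simpa using hw⟩
  loopless := by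
    constructor
    rintro u ⟨hne, -⟩
    exact hne rfl

/-- The axis-aligned closed hypercube of side length `r` with lower corner `x`. -/
def cube (d : ℕ) (x : EuclideanSpace ℝ (Fin d)) (r : ℝ) : Set (EuclideanSpace ℝ (Fin d)) :=
  {y | ∀ i, x i ≤ y i ∧ y i ≤ x i + r}

/-- The size of an object: the side length of its smallest enclosing axis-aligned hypercube. -/
noncomputable def objSize (d : ℕ) (O : Set (EuclideanSpace ℝ (Fin d))) : ℝ :=
  sInf {r : ℝ | 0 ≤ r ∧ ∃ x, O ⊆ cube d x r}

/-- The collection `O` is `c`-fat. -/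
def IsFat {ι : Type*} (d : ℕ) (c : ℝ) (O : ι → Set (EuclideanSpace ℝ (Fin d))) : Prop :=
  ∀ r : ℝ, 0 < r → ∀ x : EuclideanSpace ℝ (Fin d), ∀ P : Finset ι,
    (∀ i ∈ P, ∀ j ∈ P, i ≠ j → Disjoint (O i) (O j)) →
    (∀ i ∈ P, (O i ∩ cube d x r).Nonempty ∧ r ≤ objSize d (O i)) →
    ∃ pts : Finset (EuclideanSpace ℝ (Fin d)),
      (pts.card : ℝ) ≤ c ∧ ∀ i ∈ P, ∃ p ∈ pts, p ∈ O i

/-- The `n`-dimensional grid graph of width `n`. -/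
def gridGraphN (n : ℕ) : SimpleGraph (Fin n → Fin n) where
  Adj a b := ∑ i, ((a i : ℤ) - (b i : ℤ)).natAbs = 1
  symm := by
    constructor
    intro a b h
    beta_reduce at h ⊢
    rw [← h]
    exact Finset.sum_congr rfl fun i _ => by omega
  loopless := by
    constructor
    intro a h
    simp at h

/-- The grid graph on `ℤ²`. -/
def latticeGraph : SimpleGraph (ℤ × ℤ) where
  Adj p q := (p.1 - q.1).natAbs + (p.2 - q.2).natAbs = 1
  symm := by
    constructor
    intro p q h
    beta_reduce at h ⊢
    omega
  loopless := by
    constructor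
    intro p h
    simp at h

/-- `P` is (the vertex set of) a path on the integer grid: a finite nonempty subset of `ℤ²`
whose induced subgraph in the grid graph is a path. -/
def IsGridPath (P : Set (ℤ × ℤ)) : Prop :=
  P.Finite ∧ P.Nonempty ∧ (latticeGraph.induce P).IsTree ∧
    ∀ v : P, ((latticeGraph.induce P).neighborSet v).ncard ≤ 2

section Stmt5Aux

lemma coord_abs_le_dist (p q : EuclideanSpace ℝ (Fin 2)) (i : Fin 2) :
    |p i - q i| ≤ dist p q := by
  rw [EuclideanSpace.dist_eq]
  rw [← Real.sqrt_sq (abs_nonneg (p i - q i))]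
  apply Real.sqrt_le_sqrt
  rw [sq_abs]
  calc (p i - q i)^2 = dist (p i) (q i) ^ 2 := by rw [Real.dist_eq, sq_abs]
    _ ≤ ∑ j, dist (p j) (q j) ^ 2 :=
        Finset.single_le_sum (f := fun j => dist (p j) (q j) ^ 2)
          (fun j _ => sq_nonneg _) (Finset.mem_univ i)

lemma dist_sq_eq (p q : EuclideanSpace ℝ (Fin 2)) :
    dist p q ^ 2 = (p 0 - q 0)^2 + (p 1 - q 1)^2 := by
  rw [EuclideanSpace.dist_eq, Real.sq_sqrt (by positivity)]
  simp [Fin.sum_univ_two, Real.dist_eq, sq_abs]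

lemma ball_inter_iff {ρ : ℝ} (hρ : 0 < ρ) (a b : EuclideanSpace ℝ (Fin 2)) :
    (Metric.closedBall a ρ ∩ Metric.closedBall b ρ).Nonempty ↔ dist a b ≤ 2 * ρ := by
  constructor
  · rintro ⟨x, hx1, hx2⟩
    rw [Metric.mem_closedBall] at hx1 hx2
    calc dist a b ≤ dist a x + dist x b := dist_triangle _ _ _
      _ ≤ ρ + ρ := by rw [dist_comm a x]; exact add_le_add hx1 hx2
      _ = 2 * ρ := by ring
  · intro h
    refine ⟨midpoint ℝ a b, ?_, ?_⟩
    · rw [Metric.mem_closedBall, dist_comm, dist_left_midpoint]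
      simp only [Real.norm_two]
      linarith
    · rw [Metric.mem_closedBall, dist_comm, dist_right_midpoint]
      simp only [Real.norm_two]
      linarith

lemma floor_div_mem {c q : ℝ} (hc : 0 < c) (n : ℤ) (h0 : 0 ≤ q) (h1 : q < (n + 1) * c) :
    ⌊q / c⌋ ∈ Finset.Icc (0 : ℤ) n := by
  rw [Finset.mem_Icc]
  constructor
  · exact Int.floor_nonneg.2 (by positivity)
  · have : ⌊q / c⌋ < n + 1 := by
      rw [Int.floor_lt]
      push_cast
      rw [div_lt_iff₀ hc]
      exact h1
    omega

lemma abs_sub_lt_one_of_floor_eq {a b : ℝ} (h : ⌊a⌋ = ⌊b⌋) : |a - b| < 1 := by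
  have h1 := Int.floor_le a
  have h2 := Int.lt_floor_add_one a
  have h3 := Int.floor_le b
  have h4 := Int.lt_floor_add_one b
  rw [h] at h1 h2
  rw [abs_sub_lt_iff]
  constructor <;> linarith

lemma floor_step {c a b : ℝ} (hc : 0 < c) (h : a - b ≤ c) : ⌊a/c⌋ ≤ ⌊b/c⌋ + 1 := by
  have h1 : a / c ≤ b / c + 1 := by
    rw [div_add' _ _ _ (ne_of_gt hc)]
    gcongr
    linarith
  calc ⌊a/c⌋ ≤ ⌊b/c + 1⌋ := Int.floor_le_floor h1
    _ = ⌊b/c⌋ + 1 := Int.floor_add_one _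

lemma floor_bounds {c x : ℝ} (hc : 0 < c) {s e : ℤ} (h1 : s ≤ ⌊x/c⌋) (h2 : ⌊x/c⌋ ≤ e) :
    (s:ℝ) * c ≤ x ∧ x < ((e:ℝ) + 1) * c := by
  constructor
  · have h3 : (s:ℝ) ≤ x / c := le_trans (by exact_mod_cast Int.cast_le.mpr h1) (Int.floor_le _)
    calc (s:ℝ) * c ≤ (x/c) * c := by nlinarith
      _ = x := div_mul_cancel₀ _ (ne_of_gt hc)
  · have h3 : x / c < (e:ℝ) + 1 := by
      have := Int.lt_floor_add_one (x/c)
      have h4 : ((⌊x/c⌋:ℝ)) ≤ (e:ℝ) := by exact_mod_cast h2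
      linarith
    calc x = (x/c) * c := (div_mul_cancel₀ _ (ne_of_gt hc)).symm
      _ < ((e:ℝ) + 1) * c := by nlinarith

lemma count_in_cell {ι : Type} {ρ : ℝ} (hρ : 0 < ρ)
    (ctr : ι → EuclideanSpace ℝ (Fin 2)) (b1 b2 : ℝ)
    (I : Finset ι)
    (hx : ∀ v ∈ I, 0 ≤ ctr v 0 - b1 ∧ ctr v 0 - b1 < 4 * ρ)
    (hy : ∀ v ∈ I, 0 ≤ ctr v 1 - b2 ∧ ctr v 1 - b2 < 2 * ρ)
    (hind : ∀ u ∈ I, ∀ v ∈ I, u ≠ v →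
      ¬ (intersectionGraph fun i => Metric.closedBall (ctr i) ρ).Adj u v) :
    I.card ≤ 8 := by
  have hs2 : (0:ℝ) < Real.sqrt 2 := Real.sqrt_pos.2 (by norm_num)
  have hsq : Real.sqrt 2 ^ 2 = 2 := Real.sq_sqrt (by norm_num)
  set c : ℝ := Real.sqrt 2 * ρ with hc
  have hcpos : 0 < c := by positivity
  set g : ι → ℤ × ℤ := fun v =>
    (⌊(ctr v 0 - b1) / c⌋, ⌊(ctr v 1 - b2) / c⌋) with hg
  have hmaps : ∀ v ∈ I, g v ∈ Finset.Icc (0:ℤ) 2 ×ˢ Finset.Icc (0:ℤ) 1 := by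
    intro v hv
    rw [Finset.mem_product]
    constructor
    · apply floor_div_mem hcpos 2 (hx v hv).1
      have h4 : (4:ℝ) * ρ ≤ (2 + 1) * c := by
        rw [hc]
        nlinarith [(hx v hv).2]
      push_cast
      linarith [(hx v hv).2]
    · apply floor_div_mem hcpos 1 (hy v hv).1
      have h4 : (2:ℝ) * ρ ≤ (1 + 1) * c := by
        rw [hc]
        nlinarith
      push_cast
      linarith [(hy v hv).2]
  have hinj : Set.InjOn g I := by
    intro u hu v hv huv
    by_contra hne
    apply hind u hu v hv hne
    have h1 : |(ctr u 0 - b1) / c - (ctr v 0 - b1) / c| < 1 :=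
      abs_sub_lt_one_of_floor_eq (congrArg Prod.fst huv)
    have h2 : |(ctr u 1 - b2) / c - (ctr v 1 - b2) / c| < 1 :=
      abs_sub_lt_one_of_floor_eq (congrArg Prod.snd huv)
    rw [div_sub_div_same, show ctr u 0 - b1 - (ctr v 0 - b1) = ctr u 0 - ctr v 0 by ring,
      abs_div, abs_of_pos hcpos, div_lt_one hcpos] at h1
    rw [div_sub_div_same, show ctr u 1 - b2 - (ctr v 1 - b2) = ctr u 1 - ctr v 1 by ring,
      abs_div, abs_of_pos hcpos, div_lt_one hcpos] at h2
    refine ⟨hne, (ball_inter_iff hρ _ _).2 ?_⟩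
    have hd : dist (ctr u) (ctr v) ^ 2 < (2 * ρ) ^ 2 := by
      rw [dist_sq_eq]
      have e1 : (ctr u 0 - ctr v 0)^2 < c^2 := by
        rw [← sq_abs]
        exact pow_lt_pow_left₀ h1 (abs_nonneg _) (by norm_num)
      have e2 : (ctr u 1 - ctr v 1)^2 < c^2 := by
        rw [← sq_abs]
        exact pow_lt_pow_left₀ h2 (abs_nonneg _) (by norm_num)
      have : c^2 = 2 * ρ^2 := by rw [hc, mul_pow, hsq]
      nlinarith
    have := lt_of_pow_lt_pow_left₀ 2 (by positivity) hd
    linarith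
  calc I.card ≤ (Finset.Icc (0:ℤ) 2 ×ˢ Finset.Icc (0:ℤ) 1).card :=
        Finset.card_le_card_of_injOn g hmaps hinj
    _ ≤ 8 := by simp [Finset.card_product, Int.card_Icc]

lemma pathGraph_crossing {n : ℕ} (v w : Fin n) (hvw : (v:ℕ) + 1 = (w:ℕ)) :
    ∀ (a b : Fin n) (p : (SimpleGraph.pathGraph n).Walk a b),
      (a:ℕ) ≤ (v:ℕ) → (w:ℕ) ≤ (b:ℕ) → s(v, w) ∈ p.edges := by
  intro a b p
  induction p with
  | nil => intro h1 h2; omega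
  | @cons x y z hadj q ih =>
    intro h1 h2
    rw [SimpleGraph.pathGraph_adj] at hadj
    simp only [SimpleGraph.Walk.edges_cons, List.mem_cons]
    by_cases hc : x = v ∧ y = w
    · left; rw [hc.1, hc.2]
    · right
      apply ih ?_ h2
      have hxv : (x:ℕ) ≤ v := h1
      have : ¬((x:ℕ) = v ∧ (y:ℕ) = w) := by
        intro ⟨h3, h4⟩
        exact hc ⟨Fin.ext h3, Fin.ext h4⟩
      omega

lemma pathGraph_isTree (n : ℕ) : (SimpleGraph.pathGraph (n + 1)).IsTree := by
  constructor
  · exact SimpleGraph.pathGraph_connected n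
  · rw [SimpleGraph.isAcyclic_iff_forall_adj_isBridge]
    intro v w hadj
    have hadj' := hadj
    rw [SimpleGraph.pathGraph_adj] at hadj'
    rw [SimpleGraph.isBridge_iff_adj_and_forall_walk_mem_edges]
    intro p
    rcases hadj' with h | h
    · exact pathGraph_crossing v w h v w p le_rfl le_rfl
    · have := pathGraph_crossing w v h w v p.reverse le_rfl le_rfl
      rw [SimpleGraph.Walk.edges_reverse, List.mem_reverse, Sym2.eq_swap] at this
      exact this

end Stmt5Aux

/-- The intersection graph of a finite family of closed disks in `ℝ²` of a common
radius has layered tree-independence number at most `8`. -/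
theorem stmt5 {ι : Type} [Fintype ι] (ρ : ℝ) (hρ : 0 < ρ)
    (ctr : ι → EuclideanSpace ℝ (Fin 2)) :
    layeredTreeAlpha (intersectionGraph fun i => Metric.closedBall (ctr i) ρ) ≤ 8 := by
  apply Nat.sInf_le
  show layeredTreeAlphaLE _ 8
  cases isEmpty_or_nonempty ι with
  | inl hemp =>
    refine ⟨⟨Fin 1, inferInstance, ⊥, ?_, fun _ => (∅ : Set ι), fun v => isEmptyElim v,
      fun u _ h => isEmptyElim u, fun v => isEmptyElim v⟩, fun _ => 0,
      fun u _ h => isEmptyElim u, ?_⟩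
    · constructor
      · rw [SimpleGraph.connected_iff]
        refine ⟨fun a b => ?_, ⟨0⟩⟩
        rw [Subsingleton.elim a b]
      · exact SimpleGraph.isAcyclic_bot
    · intro t i I hI
      calc I.card ≤ Fintype.card ι := Finset.card_le_univ I
        _ = 0 := by simp
        _ ≤ 8 := by omega
  | inr hne =>
    have hu : (Finset.univ : Finset ι).Nonempty := Finset.univ_nonempty
    have h2ρ : (0:ℝ) < 2 * ρ := by linarith
    set fx : ι → ℤ := fun v => ⌊ctr v 0 / (2*ρ)⌋ with hfxdef
    set fy : ι → ℤ := fun v => ⌊ctr v 1 / (2*ρ)⌋ with hfydef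
    set m := Finset.univ.inf' hu fx with hmdef
    set M := Finset.univ.sup' hu fx with hMdef
    set my := Finset.univ.inf' hu fy with hmydef
    have hm : ∀ v, m ≤ fx v := fun v => Finset.inf'_le _ (Finset.mem_univ v)
    have hM : ∀ v, fx v ≤ M := fun v => Finset.le_sup' _ (Finset.mem_univ v)
    have hmy : ∀ v, my ≤ fy v := fun v => Finset.inf'_le _ (Finset.mem_univ v)
    set N : ℕ := (M - m).toNat with hN
    have hadj : ∀ {u v : ι},
        (intersectionGraph fun i => Metric.closedBall (ctr i) ρ).Adj u v →
        fx u ≤ fx v + 1 ∧ fx v ≤ fx u + 1 ∧ fy u ≤ fy v + 1 ∧ fy v ≤ fy u + 1 := by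
      intro u v hA
      obtain ⟨hne', hinter⟩ := hA
      have hdist := (ball_inter_iff hρ _ _).1 hinter
      have h0 := (coord_abs_le_dist (ctr u) (ctr v) 0).trans hdist
      have h1 := (coord_abs_le_dist (ctr u) (ctr v) 1).trans hdist
      rw [abs_le] at h0 h1
      refine ⟨?_, ?_, ?_, ?_⟩ <;>
        · simp only [hfxdef, hfydef]
          exact floor_step h2ρ (by linarith)
    refine ⟨⟨Fin (N+1), inferInstance, SimpleGraph.pathGraph (N+1), pathGraph_isTree N,
      fun t => {v | fx v = m + (t.val : ℤ) ∨ fx v = m + (t.val : ℤ) + 1},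
      ?_, ?_, ?_⟩, fun v => (fy v - my).toNat, ?_, ?_⟩
    · -- mem_bag
      intro v
      have h1 := hm v
      have h2 := hM v
      refine ⟨⟨(fx v - m).toNat, by omega⟩, ?_⟩
      exact Or.inl (by simp only [Fin.val_mk]; omega)
    · -- edge_bag
      intro u v hA
      obtain ⟨e1, e2, -, -⟩ := hadj hA
      have h1 := hm u
      have h2 := hM u
      have h3 := hm v
      have h4 := hM v
      refine ⟨⟨(min (fx u) (fx v) - m).toNat, by omega⟩, ?_, ?_⟩ <;>
        · simp only [Set.mem_setOf_eq, Fin.val_mk]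
          omega
    · -- bag_connected
      intro v
      rw [SimpleGraph.connected_iff]
      constructor
      · rintro ⟨a, ha⟩ ⟨b, hb⟩
        by_cases hab : a = b
        · subst hab
          have : (⟨a, ha⟩ : {t | v ∈ (fun t => {v | fx v = m + (t.val : ℤ) ∨
              fx v = m + (t.val : ℤ) + 1}) t}) = ⟨a, hb⟩ := Subtype.ext rfl
          rw [this]
        · apply SimpleGraph.Adj.reachable
          have hvals : a.val ≠ b.val := fun h => hab (Fin.ext h)
          simp only [Set.mem_setOf_eq] at ha hb
          show (SimpleGraph.pathGraph (N+1)).Adj a b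
          rw [SimpleGraph.pathGraph_adj]
          omega
      · refine ⟨⟨⟨(fx v - m).toNat, by have := hm v; have := hM v; omega⟩, ?_⟩⟩
        exact Or.inl (by simp only [Fin.val_mk]; have := hm v; omega)
    · -- layering
      intro u v hA
      obtain ⟨-, -, e3, e4⟩ := hadj hA
      have h1 := hmy u
      have h2 := hmy v
      show ((fy u - my).toNat : ℤ) ≤ ((fy v - my).toNat : ℤ) + 1
      omega
    · -- counting
      rintro t i I ⟨hsub, hind⟩
      apply count_in_cell hρ ctr ((((m + (t.val : ℤ)) : ℤ) : ℝ) * (2 * ρ))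
        ((((my + (i : ℤ)) : ℤ) : ℝ) * (2 * ρ)) I ?_ ?_ hind
      · intro v hv
        obtain ⟨hbag, hlay⟩ := hsub hv
        simp only [Set.mem_setOf_eq] at hbag
        have h1 : m + (t.val : ℤ) ≤ fx v := by omega
        have h2 : fx v ≤ m + (t.val : ℤ) + 1 := by omega
        simp only [hfxdef] at h1 h2
        obtain ⟨g1, g2⟩ := floor_bounds h2ρ h1 h2
        constructor
        · linarith
        · have : ((m + (t.val : ℤ) + 1 : ℤ) : ℝ) + 1 = ((m + (t.val : ℤ) : ℤ) : ℝ) + 2 := by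
            push_cast; ring
          rw [this] at g2
          nlinarith
      · intro v hv
        obtain ⟨hbag, hlay⟩ := hsub hv
        simp only [Set.mem_setOf_eq] at hlay
        have hfyv := hmy v
        have h1 : my + (i : ℤ) ≤ fy v := by omega
        have h2 : fy v ≤ my + (i : ℤ) := by omega
        simp only [hfydef] at h1 h2
        obtain ⟨g1, g2⟩ := floor_bounds h2ρ h1 h2
        constructor
        · linarith
        · have : ((my + (i : ℤ) : ℤ) : ℝ) + 1 = ((my + (i : ℤ) : ℤ) : ℝ) + 1 := rfl
          nlinarith
end

section
/- Let ℓ ∈ ℕ and let G be a graph that admits a tree decomposition 𝒯 = (T, {X_t}) and a layering (V_0, V_1, …) such that α(G[X_t ∩ V_i]) ≤ ℓ for every bag X_t and layer V_i. Then for every integer r ≥ 1, G has a (1 − 1/r)-general cover 𝒞 consisting of r subsets of V(G) (each vertex belonging to exactly r − 1 of them) such that tree-α(G[C]) ≤ ℓ·(r − 1) for every C ∈ 𝒞. -/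
open Classical

section AuxSTMT6
open SimpleGraph

section Parity
variable {W : Type*} {H : SimpleGraph W}

lemma parity_countP_crossing (P : W → Bool) {u v : W} (p : H.Walk u v) :
    (p.darts.countP (fun d => P d.toProd.1 != P d.toProd.2)) % 2
      = if P u = P v then 0 else 1 := by
  induction p with
  | nil => simp
  | @cons a b c h q ih =>
    rw [Walk.darts_cons, List.countP_cons]
    rcases hab : P a <;> rcases hbc : P b <;> rcases hcc : P c <;>
      simp_all <;> omega
end Parity

section Spine
variable {ι : Type} (T : SimpleGraph ι) (t₀ : ι) (m : ℕ)

def spineG : SimpleGraph (ι × Fin m) where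
  Adj x y := (x.2 = y.2 ∧ T.Adj x.1 y.1) ∨
    (x.1 = t₀ ∧ y.1 = t₀ ∧ ((x.2 : ℕ) + 1 = (y.2 : ℕ) ∨ (y.2 : ℕ) + 1 = (x.2 : ℕ)))
  symm := by
    constructor
    rintro x y (⟨h1, h2⟩ | ⟨h1, h2, h3⟩)
    · exact Or.inl ⟨h1.symm, h2.symm⟩
    · exact Or.inr ⟨h2, h1, h3.symm⟩
  loopless := by
    constructor
    rintro x (⟨-, h⟩ | ⟨-, -, h⟩)
    · exact h.ne rfl
    · omega

def sliceHom (b : Fin m) : T →g spineG T t₀ m where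
  toFun t := (t, b)
  map_rel' h := Or.inl ⟨rfl, h⟩

lemma spineG_connected (hT : T.Connected) (hm : 0 < m) : (spineG T t₀ m).Connected := by
  have hne : Nonempty ι := hT.nonempty
  rw [connected_iff]
  refine ⟨?_, ⟨(t₀, ⟨0, hm⟩)⟩⟩
  have chain : ∀ n (h : n < m), (spineG T t₀ m).Reachable (t₀, ⟨0, hm⟩) (t₀, ⟨n, h⟩) := by
    intro n
    induction n with
    | zero => exact fun h => Reachable.refl _
    | succ k ih =>
      intro h
      exact (ih (Nat.lt_of_succ_lt h)).trans
        (SimpleGraph.Adj.reachable (Or.inr ⟨rfl, rfl, Or.inl rfl⟩))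
  intro x y
  have hx : (spineG T t₀ m).Reachable x (t₀, x.2) :=
    Reachable.map (sliceHom T t₀ m x.2) (hT.preconnected x.1 t₀)
  have hy : (spineG T t₀ m).Reachable y (t₀, y.2) :=
    Reachable.map (sliceHom T t₀ m y.2) (hT.preconnected y.1 t₀)
  exact hx.trans (((chain x.2 x.2.isLt).symm.trans (chain y.2 y.2.isLt)).trans hy.symm)

lemma unslice {x y : ι × Fin m} (p : (spineG T t₀ m).Walk x y)
    (h : ∀ d ∈ p.darts, d.toProd.1.2 = d.toProd.2.2) :
    ∃ (hxy : x.2 = y.2) (q : T.Walk x.1 y.1),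
      p = (q.map (sliceHom T t₀ m x.2)).copy rfl (by rw [hxy]; rfl) := by
  induction p with
  | nil => exact ⟨rfl, Walk.nil, rfl⟩
  | @cons a b c hadj q ih =>
    obtain ⟨a1, a2⟩ := a
    obtain ⟨b1, b2⟩ := b
    have hd : a2 = b2 := h _ (by rw [Walk.darts_cons]; exact List.mem_cons_self)
    subst hd
    obtain ⟨hbc, q', hq'⟩ :=
      ih (fun d hd' => h d (by rw [Walk.darts_cons]; exact List.mem_cons_of_mem _ hd'))
    have hTadj : T.Adj a1 b1 := by
      rcases hadj with ⟨-, h'⟩ | ⟨-, -, h'⟩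
      · exact h'
      · exfalso; simp at h'
    refine ⟨hbc, Walk.cons hTadj q', ?_⟩
    rw [hq', Walk.map_cons, Walk.copy_cons]
    rfl

lemma spineG_acyclic (hT : T.IsAcyclic) : (spineG T t₀ m).IsAcyclic := by
  intro v c hc
  have ext2 : ∀ x y : ι × Fin m, x.1 = y.1 → (x.2 : ℕ) = (y.2 : ℕ) → x = y := by
    intro x y h1 h2
    exact Prod.ext h1 (Fin.ext h2)
  have hslice : ∀ d ∈ c.darts, d.toProd.1.2 = d.toProd.2.2 := by
    by_contra hcon
    push_neg at hcon
    obtain ⟨d, hdmem, hdne⟩ := hcon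
    have hadj : (spineG T t₀ m).Adj d.toProd.1 d.toProd.2 := d.adj
    have hsp : d.toProd.1.1 = t₀ ∧ d.toProd.2.1 = t₀ ∧
        ((d.toProd.1.2 : ℕ) + 1 = (d.toProd.2.2 : ℕ) ∨
          (d.toProd.2.2 : ℕ) + 1 = (d.toProd.1.2 : ℕ)) := by
      rcases hadj with ⟨h1, -⟩ | h'
      · exact absurd h1 hdne
      · exact h'
    set k : ℕ := min (d.toProd.1.2 : ℕ) (d.toProd.2.2 : ℕ) with hk
    set P : ι × Fin m → Bool := fun x => decide ((x.2 : ℕ) ≤ k) with hP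
    have hdd : ((d.toProd.1.2 : ℕ) = k ∧ (d.toProd.2.2 : ℕ) = k + 1) ∨
        ((d.toProd.2.2 : ℕ) = k ∧ (d.toProd.1.2 : ℕ) = k + 1) := by omega
    have key : ∀ d' ∈ c.darts, (P d'.toProd.1 != P d'.toProd.2) = true → d'.edge = d.edge := by
      intro d' _ hcr
      have hadj' : (spineG T t₀ m).Adj d'.toProd.1 d'.toProd.2 := d'.adj
      rcases hadj' with ⟨h1, -⟩ | ⟨h1, h2, h3⟩
      · rw [hP] at hcr; simp [h1] at hcr
      · have hcr' : ¬ (((d'.toProd.1.2 : ℕ) ≤ k) ↔ ((d'.toProd.2.2 : ℕ) ≤ k)) := by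
          rw [hP] at hcr
          simp only [bne_iff_ne, ne_eq, decide_eq_decide] at hcr
          exact hcr
        have hcr'' : ((d'.toProd.1.2 : ℕ) ≤ k ∧ ¬ (d'.toProd.2.2 : ℕ) ≤ k) ∨
            (¬ (d'.toProd.1.2 : ℕ) ≤ k ∧ (d'.toProd.2.2 : ℕ) ≤ k) := by tauto
        have hde : ((d'.toProd.1.2 : ℕ) = k ∧ (d'.toProd.2.2 : ℕ) = k + 1) ∨
            ((d'.toProd.2.2 : ℕ) = k ∧ (d'.toProd.1.2 : ℕ) = k + 1) := by omega
        rw [Dart.edge, Dart.edge]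
        rcases hde with ⟨he1, he2⟩ | ⟨he1, he2⟩ <;> rcases hdd with ⟨hf1, hf2⟩ | ⟨hf1, hf2⟩
        · rw [ext2 d'.toProd.1 d.toProd.1 (by rw [h1, hsp.1]) (by omega),
            ext2 d'.toProd.2 d.toProd.2 (by rw [h2, hsp.2.1]) (by omega)]
        · rw [ext2 d'.toProd.1 d.toProd.2 (by rw [h1, hsp.2.1]) (by omega),
            ext2 d'.toProd.2 d.toProd.1 (by rw [h2, hsp.1]) (by omega)]
          exact Sym2.eq_swap
        · rw [ext2 d'.toProd.1 d.toProd.2 (by rw [h1, hsp.2.1]) (by omega),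
            ext2 d'.toProd.2 d.toProd.1 (by rw [h2, hsp.1]) (by omega)]
          exact Sym2.eq_swap
        · rw [ext2 d'.toProd.1 d.toProd.1 (by rw [h1, hsp.1]) (by omega),
            ext2 d'.toProd.2 d.toProd.2 (by rw [h2, hsp.2.1]) (by omega)]
    have hpar := parity_countP_crossing P c
    rw [if_pos rfl] at hpar
    have hdcross : (P d.toProd.1 != P d.toProd.2) = true := by
      rw [hP]
      simp only [bne_iff_ne, ne_eq, decide_eq_decide]
      intro hiff
      omega
    have hpos : 0 < c.darts.countP (fun d' => P d'.toProd.1 != P d'.toProd.2) :=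
      List.countP_pos_iff.mpr ⟨d, hdmem, hdcross⟩
    have h2le : 2 ≤ c.darts.countP (fun d' => P d'.toProd.1 != P d'.toProd.2) := by omega
    have hcnt : c.darts.countP (fun d' => P d'.toProd.1 != P d'.toProd.2)
        ≤ c.darts.countP (fun d' => d'.edge == d.edge) :=
      List.countP_mono_left (fun d' hd' hp => by
        simpa using key d' hd' hp)
    have hcount : c.edges.count d.edge = c.darts.countP (fun d' => d'.edge == d.edge) := by
      show (c.darts.map Dart.edge).count d.edge = _
      rw [List.count_eq_countP, List.countP_map]
      rfl
    have hle1 := hc.isCircuit.isTrail.count_edges_le_one d.edge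
    omega
  obtain ⟨hxy, q, hq⟩ := unslice T t₀ m c hslice
  rw [hq] at hc
  have hc' : ((q.map (sliceHom T t₀ m v.2)).copy rfl rfl).IsCycle := hc
  rw [Walk.copy_rfl_rfl] at hc'
  exact hT q ((Walk.map_isCycle_iff_of_injective
    (fun a a' h => congrArg Prod.fst h)).mp hc')

lemma spineG_isTree (hT : T.IsTree) (hm : 0 < m) : (spineG T t₀ m).IsTree :=
  ⟨spineG_connected T t₀ m hT.isConnected hm, spineG_acyclic T t₀ m hT.IsAcyclic⟩

end Spine

section Arith

lemma band_succ_nat {r s : ℕ} (hs : s < r) {n : ℕ} (hn : n % r ≠ s) :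
    (n + 1 + (r - 1 - s)) / r = (n + (r - 1 - s)) / r := by
  have h1 : n + 1 + (r - 1 - s) = (n + (r - 1 - s)) + 1 := by omega
  rw [h1, Nat.succ_div]
  have hnd : ¬ r ∣ (n + (r - 1 - s) + 1) := by
    rintro ⟨c, hc⟩
    rcases c with _ | c
    · omega
    · rw [Nat.mul_succ] at hc
      have hn' : n = r * c + s := by omega
      apply hn
      rw [hn', Nat.mul_add_mod]
      exact Nat.mod_eq_of_lt hs
  simp [hnd]

lemma band_adj {r s : ℕ} (hs : s < r) {i j : ℕ} (hi : i % r ≠ s) (hj : j % r ≠ s)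
    (h1 : i ≤ j + 1) (h2 : j ≤ i + 1) :
    (i + (r - 1 - s)) / r = (j + (r - 1 - s)) / r := by
  rcases Nat.lt_trichotomy i j with h | h | h
  · have hj' : j = i + 1 := by omega
    subst hj'
    exact (band_succ_nat hs hi).symm
  · rw [h]
  · have hi' : i = j + 1 := by omega
    subst hi'
    exact band_succ_nat hs hj

lemma band_mem_interval {r s b : ℕ} (hs : s < r) {n : ℕ} (hn : n % r ≠ s)
    (hb : (n + (r - 1 - s)) / r = b) :
    (b * r + s + 1 - r ≤ n ∧ n < b * r + s + 1) ∧ n ≠ b * r + s := by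
  have hdm := Nat.div_add_mod (n + (r - 1 - s)) r
  have hrem : (n + (r - 1 - s)) % r < r := Nat.mod_lt _ (by omega)
  rw [hb] at hdm
  have hba : b * r = r * b := Nat.mul_comm b r
  refine ⟨⟨by omega, by omega⟩, ?_⟩
  intro hne
  apply hn
  rw [hne, Nat.mul_comm b r, Nat.mul_add_mod]
  exact Nat.mod_eq_of_lt hs

end Arith

lemma main_band {V : Type} [Fintype V] (G : SimpleGraph V) (l : ℕ)
    (td : TreeDecomp G) (L : V → ℕ) (hL : IsLayering G L)
    (hbag : ∀ (t : td.ι) (i : ℕ), IndepLE G (td.bag t ∩ {v | L v = i}) l)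
    (r : ℕ) (hr : 1 ≤ r) (s : ℕ) (hs : s < r) :
    treeAlphaLE (G.induce {v | L v % r ≠ s}) (l * (r - 1)) := by
  classical
  haveI := td.fin
  set C : Set V := {v | L v % r ≠ s} with hC
  set Bnd : V → ℕ := fun v => (L v + (r - 1 - s)) / r with hBnd
  set m : ℕ := (Finset.univ.sup Bnd) + 1 with hm
  have hmpos : 0 < m := Nat.succ_pos _
  have hBlt : ∀ v : V, Bnd v < m := fun v =>
    Nat.lt_succ_of_le (Finset.le_sup (Finset.mem_univ v))
  obtain ⟨t₀⟩ : Nonempty td.ι := td.isTree.isConnected.nonempty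
  have hband : ∀ u w : V, u ∈ C → w ∈ C → G.Adj u w → Bnd u = Bnd w := by
    intro u w hu hw hadj
    have h1 : (L u : ℤ) ≤ (L w : ℤ) + 1 := hL hadj
    have h2 : (L w : ℤ) ≤ (L u : ℤ) + 1 := hL hadj.symm
    exact band_adj hs hu hw (by exact_mod_cast h1) (by exact_mod_cast h2)
  refine ⟨⟨td.ι × Fin m, inferInstance, spineG td.T t₀ m,
    spineG_isTree td.T t₀ m td.isTree hmpos,
    fun x => {w : ↥C | (w : V) ∈ td.bag x.1 ∧ Bnd (w : V) = (x.2 : ℕ)},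
    ?_, ?_, ?_⟩, ?_⟩
  · -- mem_bag
    intro w
    obtain ⟨t, ht⟩ := td.mem_bag (w : V)
    exact ⟨(t, ⟨Bnd (w : V), hBlt _⟩), ht, rfl⟩
  · -- edge_bag
    intro u w hadj
    have hGr : G.Adj (u : V) (w : V) := hadj
    obtain ⟨t, ht1, ht2⟩ := td.edge_bag hGr
    exact ⟨(t, ⟨Bnd (u : V), hBlt _⟩), ⟨ht1, rfl⟩,
      ⟨ht2, (hband (u : V) (w : V) u.2 w.2 hGr).symm⟩⟩
  · -- bag_connected
    intro w
    set Bw : Fin m := ⟨Bnd (w : V), hBlt _⟩ with hBw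
    have hc := td.bag_connected (w : V)
    have e : (td.T.induce {t | (w : V) ∈ td.bag t}) ≃g
        ((spineG td.T t₀ m).induce
          {x | w ∈ {w' : ↥C | (w' : V) ∈ td.bag x.1 ∧ Bnd (w' : V) = (x.2 : ℕ)}}) := by
      refine ⟨⟨fun t => ⟨(t.1, Bw), ⟨t.2, rfl⟩⟩, fun x => ⟨x.1.1, x.2.1⟩,
        fun t => rfl, ?_⟩, ?_⟩
      · rintro ⟨⟨x1, x2⟩, hx1, hx2⟩
        exact Subtype.ext (Prod.ext rfl (Fin.ext hx2))
      · intro t t'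
        show (spineG td.T t₀ m).Adj ((t : td.ι), Bw) ((t' : td.ι), Bw) ↔ td.T.Adj t t'
        constructor
        · rintro (⟨-, h⟩ | ⟨-, -, h3⟩)
          · exact h
          · exfalso
            simp at h3
        · intro h
          exact Or.inl ⟨rfl, h⟩
    exact e.connected_iff.mp hc
  · -- IndepNumLE
    intro x I hI
    obtain ⟨hIsub, hIind⟩ := hI
    set J : Finset V := I.map ⟨Subtype.val, Subtype.val_injective⟩ with hJ
    have hJmem : ∀ v ∈ J, ∃ u : ↥C, u ∈ I ∧ (u : V) = v := by
      intro v hv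
      obtain ⟨u, hu, huv⟩ := Finset.mem_map.mp hv
      exact ⟨u, hu, huv⟩
    have hJprops : ∀ v ∈ J, v ∈ td.bag x.1 ∧ Bnd v = (x.2 : ℕ) ∧ L v % r ≠ s := by
      intro v hv
      obtain ⟨u, hu, rfl⟩ := hJmem v hv
      have := hIsub hu
      exact ⟨this.1, this.2, u.2⟩
    set K := J.image L with hK
    have hcard : J.card = ∑ i ∈ K, (J.filter fun v => L v = i).card :=
      Finset.card_eq_sum_card_fiberwise (fun v hv => Finset.mem_image_of_mem L hv)
    have hfib : ∀ i ∈ K, (J.filter fun v => L v = i).card ≤ l := by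
      intro i _
      apply hbag x.1 i
      constructor
      · intro v hv
        have hv' := Finset.mem_coe.mp hv
        rw [Finset.mem_filter] at hv'
        exact ⟨(hJprops v hv'.1).1, hv'.2⟩
      · intro u hu v hv hne
        have hu' := (Finset.mem_filter.mp hu).1
        have hv' := (Finset.mem_filter.mp hv).1
        obtain ⟨u', hu'I, rfl⟩ := hJmem u hu'
        obtain ⟨v', hv'I, rfl⟩ := hJmem v hv'
        have hne' : u' ≠ v' := fun h => hne (congrArg Subtype.val h)
        exact hIind u' hu'I v' hv'I hne'
    have hKcard : K.card ≤ r - 1 := by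
      have hsub : K ⊆ (Finset.Ico ((x.2 : ℕ) * r + s + 1 - r)
          ((x.2 : ℕ) * r + s + 1)).erase ((x.2 : ℕ) * r + s) := by
        intro i hi
        obtain ⟨v, hv, rfl⟩ := Finset.mem_image.mp hi
        obtain ⟨-, hb, hmod⟩ := hJprops v hv
        obtain ⟨⟨hlo, hhi⟩, hneq⟩ := band_mem_interval hs hmod hb
        exact Finset.mem_erase.mpr ⟨hneq, Finset.mem_Ico.mpr ⟨hlo, hhi⟩⟩
      calc K.card ≤ _ := Finset.card_le_card hsub
        _ ≤ r - 1 := by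
          rw [Finset.card_erase_of_mem (Finset.mem_Ico.mpr ⟨by omega, by omega⟩),
            Nat.card_Ico]
          omega
    have : I.card = J.card := (Finset.card_map _).symm
    rw [this, hcard]
    calc ∑ i ∈ K, (J.filter fun v => L v = i).card ≤ ∑ _i ∈ K, l :=
          Finset.sum_le_sum hfib
      _ = K.card * l := by rw [Finset.sum_const, smul_eq_mul]
      _ ≤ (r - 1) * l := Nat.mul_le_mul_right l hKcard
      _ = l * (r - 1) := Nat.mul_comm _ _


lemma card_filter_ne_range {r a : ℕ} (h : a < r) (p : ℕ → Prop) (inst : DecidablePred p)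
    (hp : ∀ x, p x ↔ a ≠ x) :
    Multiset.card (Multiset.filter p (Multiset.range r)) = r - 1 := by
  have hmem : a ∈ Multiset.range r := Multiset.mem_range.mpr h
  rw [Multiset.filter_congr (fun x _ => hp x)]
  rw [show Multiset.range r = a ::ₘ (Multiset.range r).erase a from
    (Multiset.cons_erase hmem).symm]
  rw [Multiset.filter_cons_of_neg _ (by simp)]
  rw [Multiset.filter_eq_self.mpr
    (fun x hx => ((Multiset.nodup_range r).mem_erase_iff.mp hx).1.symm)]
  rw [Multiset.card_erase_of_mem hmem, Multiset.card_range]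
  exact Nat.pred_eq_sub_one

end AuxSTMT6

/-- From a tree decomposition and a layering with `α(G[X_t ∩ V_i]) ≤ ℓ`, for every
`r ≥ 1` one gets a `(1 - 1/r)`-general cover consisting of `r` subsets, each vertex belonging
to exactly `r - 1` of them, all whose induced subgraphs have tree-independence number at most
`ℓ·(r-1)`. -/
theorem stmt6 {V : Type} [Fintype V] (G : SimpleGraph V) (l : ℕ)
    (td : TreeDecomp G) (L : V → ℕ) (hL : IsLayering G L)
    (hbag : ∀ (t : td.ι) (i : ℕ), IndepLE G (td.bag t ∩ {v | L v = i}) l)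
    (r : ℕ) (hr : 1 ≤ r) :
    ∃ 𝒞 : Multiset (Set V),
      Multiset.card 𝒞 = r ∧
      IsGeneralCover (1 - 1 / (r : ℝ)) 𝒞 ∧
      (∀ v : V, coverCount 𝒞 v = r - 1) ∧
      ∀ C ∈ 𝒞, treeAlpha (G.induce C) ≤ l * (r - 1) := by
  classical
  set 𝒞 : Multiset (Set V) := (Multiset.range r).map (fun s => {v | L v % r ≠ s}) with h𝒞
  have hcard : Multiset.card 𝒞 = r := by simp [h𝒞]
  have hcc : ∀ v : V, coverCount 𝒞 v = r - 1 := by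
    intro v
    show Multiset.countP (fun C => v ∈ C) 𝒞 = r - 1
    rw [h𝒞, Multiset.countP_map]
    exact card_filter_ne_range (Nat.mod_lt _ (by omega)) _ _ (fun x => Iff.rfl)
  refine ⟨𝒞, hcard, ⟨?_, ?_⟩, hcc, ?_⟩
  · intro h
    rw [h] at hcard
    simp at hcard
    omega
  · intro v
    rw [hcc v, hcard, Nat.cast_sub hr]
    have hrne : (r : ℝ) ≠ 0 := by
      have : (0 : ℝ) < r := by exact_mod_cast hr
      linarith
    have : (1 - 1 / (r : ℝ)) * r = r - 1 := by field_simp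
    rw [this]
    norm_num
  · intro C hC
    obtain ⟨s, hsr, rfl⟩ := Multiset.mem_map.mp hC
    exact Nat.sInf_le (main_band G l td L hL hbag r hr s (Multiset.mem_range.mp hsr))
end

section
/- Every finite collection of closed Euclidean balls in ℝ^d (d ≥ 2) is (3^d · d!)-fat; in particular, for every r > 0 and every axis-aligned closed hypercube R of side length r, any subcollection of pairwise disjoint balls from the collection, each of diameter at least r and each intersecting R, has at most 3^d · d! members. -/
open Classical

lemma coord_le_dist' {d : ℕ} (a b : EuclideanSpace ℝ (Fin d)) (m : Fin d) :
    |a m - b m| ≤ dist a b := by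
  rw [EuclideanSpace.dist_eq]
  have h1 : |a m - b m| = Real.sqrt (dist (a m) (b m) ^ 2) := by
    rw [Real.sqrt_sq dist_nonneg]; exact (Real.dist_eq _ _).symm
  rw [h1]
  apply Real.sqrt_le_sqrt
  exact Finset.single_le_sum (fun i _ => sq_nonneg (dist (a i) (b i))) (Finset.mem_univ m)

lemma nat_pow_le_sq_factorial' (n : ℕ) : n ^ n ≤ n.factorial ^ 2 := by
  have h1 : n.factorial = ∏ i ∈ Finset.range n, (i + 1) := by
    induction n with
    | zero => simp
    | succ k ih => rw [Finset.prod_range_succ, ← ih, Nat.factorial_succ]; ring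
  have h2 : n.factorial = ∏ i ∈ Finset.range n, (n - i) := by
    rw [h1]
    have := Finset.prod_range_reflect (fun i => i + 1) n
    rw [← this]
    apply Finset.prod_congr rfl
    intro i hi
    simp only [Finset.mem_range] at hi
    omega
  calc n ^ n = ∏ _i ∈ Finset.range n, n := by simp
    _ ≤ ∏ i ∈ Finset.range n, (i + 1) * (n - i) := by
        apply Finset.prod_le_prod'
        intro i hi
        simp only [Finset.mem_range] at hi
        have h3 : i ≤ i * (n - i) := Nat.le_mul_of_pos_right i (by omega)
        calc n = i + (n - i) := by omega
          _ ≤ i * (n - i) + (n - i) := by omega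
          _ = (i + 1) * (n - i) := by ring
    _ = n.factorial ^ 2 := by rw [Finset.prod_mul_distrib, ← h1, ← h2, sq]

lemma move_center' {E : Type*} [NormedAddCommGroup E] [NormedSpace ℝ E]
    (c qp : E) (ρ r : ℝ) (hq : dist qp c ≤ ρ) (hr : 0 < r) (hρ : r / 2 ≤ ρ) :
    ∃ c' : E, dist c' qp ≤ r / 2 ∧ dist c' c ≤ ρ - r / 2 := by
  set t := dist qp c with ht
  rcases le_or_gt t (r / 2) with h | h
  · refine ⟨c, by rw [dist_comm, ← ht]; exact h, by simp; linarith⟩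
  · have ht0 : 0 < t := by linarith
    set s := (r / 2) / t with hs
    have hst : s * t = r / 2 := div_mul_cancel₀ _ ht0.ne'
    have hs0 : 0 ≤ s := by positivity
    have hs1 : s ≤ 1 := by rw [hs, div_le_one ht0]; linarith
    have hnt : ‖c - qp‖ = t := by rw [ht, dist_comm, dist_eq_norm]
    refine ⟨qp + s • (c - qp), ?_, ?_⟩
    · rw [dist_eq_norm, add_sub_cancel_left, norm_smul, Real.norm_eq_abs,
        abs_of_nonneg hs0, hnt, hst]
    · have heq : qp + s • (c - qp) - c = (s - 1) • (c - qp) := by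
        rw [sub_smul, one_smul]; abel
      rw [dist_eq_norm, heq, norm_smul, Real.norm_eq_abs, abs_of_nonpos (by linarith), hnt]
      nlinarith [hst, hq]

lemma ball_packing' {ι : Type} (d : ℕ) (hd : 2 ≤ d)
    (ctr : ι → EuclideanSpace ℝ (Fin d)) (rad : ι → ℝ) (hrad : ∀ i, 0 < rad i)
    (r : ℝ) (hr : 0 < r) (x : EuclideanSpace ℝ (Fin d)) (P : Finset ι)
    (hdisj : ∀ i ∈ P, ∀ j ∈ P, i ≠ j →
      Disjoint (Metric.closedBall (ctr i) (rad i)) (Metric.closedBall (ctr j) (rad j)))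
    (hmeet : ∀ i ∈ P, (Metric.closedBall (ctr i) (rad i) ∩ cube d x r).Nonempty ∧ r ≤ 2 * rad i) :
    (P.card : ℝ) ≤ (3 : ℝ) ^ d * (Nat.factorial d : ℝ) := by
  classical
  set k : ℕ := ⌈2 * Real.sqrt d⌉₊ with hk
  have hd1 : (1:ℝ) ≤ Real.sqrt d := by
    rw [show (1:ℝ) = Real.sqrt 1 by simp]
    exact Real.sqrt_le_sqrt (by exact_mod_cast (by omega : 1 ≤ d))
  have hk2 : 2 * Real.sqrt d ≤ (k:ℝ) := Nat.le_ceil _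
  have hk3 : (k:ℝ) ≤ 3 * Real.sqrt d := by
    have := Nat.ceil_lt_add_one (by positivity : (0:ℝ) ≤ 2 * Real.sqrt d)
    rw [← hk] at this
    linarith
  have hkpos : 0 < k := by
    have : (0:ℝ) < (k:ℝ) := by linarith
    exact_mod_cast this
  -- choose a point of each ball inside the cube
  have hq : ∀ i ∈ P, ∃ qp, dist qp (ctr i) ≤ rad i ∧ qp ∈ cube d x r := by
    intro i hi
    obtain ⟨qp, hq1, hq2⟩ := (hmeet i hi).1
    exact ⟨qp, Metric.mem_closedBall.mp hq1, hq2⟩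
  choose q hq1 hq2 using hq
  -- move the centers
  have hmove : ∀ (i : ι) (hi : i ∈ P), ∃ c',
      dist c' (q i hi) ≤ r / 2 ∧ dist c' (ctr i) ≤ rad i - r / 2 := by
    intro i hi
    exact move_center' (ctr i) (q i hi) (rad i) r (hq1 i hi) hr (by linarith [(hmeet i hi).2])
  choose c' hc1 hc2 using hmove
  -- moved centers are pairwise far apart
  have hfar : ∀ (i) (hi : i ∈ P) (j) (hj : j ∈ P), i ≠ j → r < dist (c' i hi) (c' j hj) := by
    intro i hi j hj hne
    have hdd : rad i + rad j < dist (ctr i) (ctr j) :=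
      (disjoint_closedBall_closedBall_iff (hrad i).le (hrad j).le).mp (hdisj i hi j hj hne)
    have t4 := dist_triangle4 (ctr i) (c' i hi) (c' j hj) (ctr j)
    have e1 : dist (ctr i) (c' i hi) = dist (c' i hi) (ctr i) := dist_comm _ _
    linarith [hc2 i hi, hc2 j hj]
  -- coordinates of moved centers lie in a cube of side 2r
  have hcoord : ∀ (i) (hi : i ∈ P) (m : Fin d),
      0 ≤ c' i hi m - (x m - r/2) ∧ c' i hi m - (x m - r/2) ≤ 2 * r := by
    intro i hi m
    have h1 := coord_le_dist' (c' i hi) (q i hi) m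
    have h2 := abs_le.mp (h1.trans (hc1 i hi))
    have h3 := hq2 i hi m
    exact ⟨by linarith [h2.1, h3.1], by linarith [h2.2, h3.2]⟩
  -- the grid cell map
  set w : ℝ := 2 * r / k with hw
  have hk0' : (0:ℝ) < k := by exact_mod_cast hkpos
  have hwpos : 0 < w := by rw [hw]; positivity
  have hkw : (k:ℝ) * w = 2 * r := by rw [hw]; field_simp
  set F : ι → (Fin d → Fin k) := fun i =>
    if hi : i ∈ P then
      (fun m => ⟨min (k-1) (⌊(c' i hi m - (x m - r/2)) / w⌋.toNat), by omega⟩)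
    else fun _ => ⟨0, hkpos⟩ with hF
  have hcell : ∀ (i) (hi : i ∈ P) (m : Fin d),
      ((F i m : ℕ) : ℝ) * w ≤ c' i hi m - (x m - r/2) ∧
      c' i hi m - (x m - r/2) ≤ (((F i m : ℕ) : ℝ) + 1) * w := by
    intro i hi m
    have hb := hcoord i hi m
    set u := (c' i hi m - (x m - r/2)) / w with hu
    have hu0 : 0 ≤ u := div_nonneg hb.1 hwpos.le
    have huk : u ≤ k := by
      rw [hu, div_le_iff₀ hwpos]
      calc c' i hi m - (x m - r/2) ≤ 2 * r := hb.2
        _ = k * w := hkw.symm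
    have hfl0 : (0:ℤ) ≤ ⌊u⌋ := Int.floor_nonneg.mpr hu0
    have hval : (F i m : ℕ) = min (k-1) (⌊u⌋.toNat) := by
      simp only [hF, dif_pos hi, hu]
    have hcst : ((⌊u⌋.toNat : ℕ) : ℝ) = ((⌊u⌋ : ℤ) : ℝ) := by
      rw [← Int.cast_natCast, Int.toNat_of_nonneg hfl0]
    have hnu : ((⌊u⌋.toNat : ℕ) : ℝ) ≤ u := by
      rw [hcst]; exact Int.floor_le u
    have hun : u < ((⌊u⌋.toNat : ℕ) : ℝ) + 1 := by
      rw [hcst]; exact Int.lt_floor_add_one u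
    have hmain : ((F i m : ℕ) : ℝ) ≤ u ∧ u ≤ ((F i m : ℕ) : ℝ) + 1 := by
      rcases le_or_gt (⌊u⌋.toNat) (k-1) with hle | hlt
      · rw [hval, min_eq_right hle]
        exact ⟨hnu, hun.le⟩
      · have hge : k ≤ ⌊u⌋.toNat := by omega
        rw [hval, min_eq_left (by omega)]
        have hc1' : ((k:ℝ) : ℝ) ≤ ((⌊u⌋.toNat : ℕ) : ℝ) := by exact_mod_cast hge
        have hcast : (((k-1 : ℕ)) : ℝ) = (k:ℝ) - 1 := by
          have : 1 ≤ k := hkpos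
          push_cast [Nat.cast_sub this]
          ring
        rw [hcast]
        constructor
        · linarith
        · linarith
    constructor
    · have := hmain.1
      calc ((F i m : ℕ) : ℝ) * w ≤ u * w := by nlinarith [hwpos.le]
        _ = c' i hi m - (x m - r/2) := div_mul_cancel₀ _ hwpos.ne'
    · have := hmain.2
      calc c' i hi m - (x m - r/2) = u * w := (div_mul_cancel₀ _ hwpos.ne').symm
        _ ≤ (((F i m : ℕ) : ℝ) + 1) * w := by nlinarith [hwpos.le]
  -- injectivity on P
  have hinj : Set.InjOn F P := by
    intro i hi j hj hij
    by_contra hne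
    have hfar' := hfar i hi j hj hne
    have hle : dist (c' i hi) (c' j hj) ≤ r := by
      rw [EuclideanSpace.dist_eq]
      have hsum : ∑ m : Fin d, dist (c' i hi m) (c' j hj m) ^ 2 ≤ d * w ^ 2 := by
        have hbd : ∀ m : Fin d, dist (c' i hi m) (c' j hj m) ^ 2 ≤ w ^ 2 := by
          intro m
          have h1 := hcell i hi m
          have h2 := hcell j hj m
          rw [hij] at h1
          have habs : |c' i hi m - c' j hj m| ≤ w := by
            rw [abs_le]
            constructor <;> nlinarith [h1.1, h1.2, h2.1, h2.2]
          rw [Real.dist_eq]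
          exact pow_le_pow_left₀ (abs_nonneg _) habs 2
        calc ∑ m : Fin d, dist (c' i hi m) (c' j hj m) ^ 2
            ≤ ∑ _m : Fin d, w ^ 2 := Finset.sum_le_sum (fun m _ => hbd m)
          _ = d * w ^ 2 := by simp [mul_comm]
      have hdw : (d:ℝ) * w ^ 2 ≤ r ^ 2 := by
        have hsd : Real.sqrt d ^ 2 = (d:ℝ) := Real.sq_sqrt (by positivity)
        have hrw : Real.sqrt d * w ≤ r := by
          have h0 : (0:ℝ) ≤ ((k:ℝ) - 2 * Real.sqrt d) * w :=
            mul_nonneg (by linarith) hwpos.le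
          have h1 : ((k:ℝ) - 2 * Real.sqrt d) * w = 2 * r - 2 * (Real.sqrt d * w) := by
            rw [sub_mul, hkw]; ring
          linarith [h1 ▸ h0]
        have hprod : (Real.sqrt d * w) * (Real.sqrt d * w) ≤ r * r :=
          mul_le_mul hrw hrw (by positivity) hr.le
        calc (d:ℝ) * w ^ 2 = (Real.sqrt d * w) * (Real.sqrt d * w) := by
              linear_combination (-w^2) * hsd
          _ ≤ r * r := hprod
          _ = r ^ 2 := (sq r).symm
      calc Real.sqrt (∑ m : Fin d, dist (c' i hi m) (c' j hj m) ^ 2)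
          ≤ Real.sqrt (r ^ 2) := Real.sqrt_le_sqrt (hsum.trans hdw)
        _ = r := Real.sqrt_sq hr.le
    linarith
  -- cardinality bound
  have hcard : P.card ≤ k ^ d := by
    have h1 : P.card ≤ (Finset.univ : Finset (Fin d → Fin k)).card :=
      Finset.card_le_card_of_injOn F (fun a _ => Finset.mem_univ _) hinj
    simpa using h1
  -- final numeric chain
  have hchain : ((k:ℝ)) ^ d ≤ 3 ^ d * (Nat.factorial d : ℝ) := by
    have h1 : ((k:ℝ)) ^ d ≤ (3 * Real.sqrt d) ^ d :=
      pow_le_pow_left₀ (Nat.cast_nonneg k) hk3 d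
    have h2 : (3 * Real.sqrt d : ℝ) ^ d = 3 ^ d * (Real.sqrt d) ^ d := mul_pow _ _ _
    have h3 : (Real.sqrt d) ^ d ≤ (Nat.factorial d : ℝ) := by
      have ha : ((Real.sqrt d) ^ d) ^ 2 = (d:ℝ) ^ d := by
        rw [← pow_mul, mul_comm, pow_mul, Real.sq_sqrt (by positivity : (0:ℝ) ≤ (d:ℝ))]
      have hb : (d:ℝ) ^ d ≤ ((Nat.factorial d : ℝ)) ^ 2 := by
        exact_mod_cast nat_pow_le_sq_factorial' d
      calc (Real.sqrt d) ^ d = Real.sqrt (((Real.sqrt d) ^ d) ^ 2) :=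
            (Real.sqrt_sq (by positivity)).symm
        _ ≤ Real.sqrt (((Nat.factorial d : ℝ)) ^ 2) :=
            Real.sqrt_le_sqrt (by rw [ha]; exact hb)
        _ = (Nat.factorial d : ℝ) := Real.sqrt_sq (by positivity)
    calc ((k:ℝ)) ^ d ≤ 3 ^ d * (Real.sqrt d) ^ d := by rw [← h2]; exact h1
      _ ≤ 3 ^ d * (Nat.factorial d : ℝ) := by
          apply mul_le_mul_of_nonneg_left h3 (by positivity)
  calc (P.card : ℝ) ≤ ((k ^ d : ℕ) : ℝ) := by exact_mod_cast hcard
    _ = ((k:ℝ)) ^ d := by push_cast; ring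
    _ ≤ 3 ^ d * (Nat.factorial d : ℝ) := hchain

lemma objSize_closedBall_le' {d : ℕ} (c : EuclideanSpace ℝ (Fin d)) (ρ : ℝ) (hρ : 0 ≤ ρ) :
    objSize d (Metric.closedBall c ρ) ≤ 2 * ρ := by
  apply csInf_le
  · exact ⟨0, fun y hy => hy.1⟩
  · refine ⟨by linarith, (WithLp.toLp 2 (fun m => c m - ρ) : EuclideanSpace ℝ (Fin d)), ?_⟩
    intro y hy m
    have h1 := coord_le_dist' y c m
    rw [Metric.mem_closedBall] at hy
    have h2 := abs_le.mp (h1.trans hy)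
    constructor
    · show c m - ρ ≤ y m; linarith [h2.1]
    · show y m ≤ (c m - ρ) + 2 * ρ; linarith [h2.2]

/-- Every finite collection of closed balls in `ℝ^d` (`d ≥ 2`) is `3^d·d!`-fat;
in particular any pairwise disjoint subcollection of balls of diameter at least `r` meeting a
size-`r` hypercube has at most `3^d·d!` members. -/
theorem stmt11 {ι : Type} [Fintype ι] (d : ℕ) (hd : 2 ≤ d)
    (ctr : ι → EuclideanSpace ℝ (Fin d)) (rad : ι → ℝ) (hrad : ∀ i, 0 < rad i) :
    IsFat d ((3 : ℝ) ^ d * (Nat.factorial d : ℝ))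
      (fun i => Metric.closedBall (ctr i) (rad i)) ∧
    ∀ r : ℝ, 0 < r → ∀ x : EuclideanSpace ℝ (Fin d), ∀ P : Finset ι,
      (∀ i ∈ P, ∀ j ∈ P, i ≠ j →
        Disjoint (Metric.closedBall (ctr i) (rad i)) (Metric.closedBall (ctr j) (rad j))) →
      (∀ i ∈ P, (Metric.closedBall (ctr i) (rad i) ∩ cube d x r).Nonempty ∧ r ≤ 2 * rad i) →
      (P.card : ℝ) ≤ (3 : ℝ) ^ d * (Nat.factorial d : ℝ) := by
  have key : ∀ r : ℝ, 0 < r → ∀ x : EuclideanSpace ℝ (Fin d), ∀ P : Finset ι,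
      (∀ i ∈ P, ∀ j ∈ P, i ≠ j →
        Disjoint (Metric.closedBall (ctr i) (rad i)) (Metric.closedBall (ctr j) (rad j))) →
      (∀ i ∈ P, (Metric.closedBall (ctr i) (rad i) ∩ cube d x r).Nonempty ∧ r ≤ 2 * rad i) →
      (P.card : ℝ) ≤ (3 : ℝ) ^ d * (Nat.factorial d : ℝ) := fun r hr x P h1 h2 =>
    ball_packing' d hd ctr rad hrad r hr x P h1 h2
  refine ⟨?_, key⟩
  intro r hr x P hdisj hmeet
  have hP : (P.card : ℝ) ≤ (3 : ℝ) ^ d * (Nat.factorial d : ℝ) := by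
    apply key r hr x P hdisj
    intro i hi
    obtain ⟨hne, hsz⟩ := hmeet i hi
    exact ⟨hne, hsz.trans (objSize_closedBall_le' (ctr i) (rad i) (hrad i).le)⟩
  refine ⟨P.image ctr, ?_, ?_⟩
  · exact le_trans (by exact_mod_cast Finset.card_image_le) hP
  · intro i hi
    exact ⟨ctr i, Finset.mem_image_of_mem ctr hi, Metric.mem_closedBall_self (hrad i).le⟩
end
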